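/- Let d ≥ 2 and let g : ℕ → GL(d,ℝ) have bounded steps; for each n ∈ ℕ fix a singular value decomposition g(n) = k(n)·diag(α(n))·k'(n). Then there exists C > 0 such that for all n ≤ m in ℕ: sin∠( k(n)·e₁ , k(m)·e₁ ) ≤ C · Σ_{j=n}^{m−1} ( α(j) 1 / α(j) 0 ). In particular, if the series Σ_j α(j) 1/α(j) 0 converges, then for every ε > 0 there is N such that sin∠(k(n)·e₁, k(m)·e₁) < ε for all m ≥ n ≥ N. -/

import Mathlib

open Matrix

/-- The operator norm of a `d × d` real matrix acting on Euclidean `ℝ^d`. -/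
noncomputable def opNorm {d : ℕ} (M : Matrix (Fin d) (Fin d) ℝ) : ℝ :=
  ‖LinearMap.toContinuousLinearMap (Matrix.toEuclideanLin M)‖

/-- The action of a `d × d` real matrix on Euclidean `ℝ^d`. -/
noncomputable def appE {d : ℕ} (M : Matrix (Fin d) (Fin d) ℝ)
    (v : EuclideanSpace ℝ (Fin d)) : EuclideanSpace ℝ (Fin d) :=
  Matrix.toEuclideanLin M v

/-- `IsSVD g k α k'` means `g = k · diag(α) · k'` is a singular value decomposition:
`k, k'` are orthogonal and `α` is positive and nonincreasing. -/
def IsSVD {d : ℕ} (g k : Matrix (Fin d) (Fin d) ℝ) (α : Fin d → ℝ)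
    (k' : Matrix (Fin d) (Fin d) ℝ) : Prop :=
  k * kᵀ = 1 ∧ k' * k'ᵀ = 1 ∧ (∀ i, 0 < α i) ∧ Antitone α ∧
    g = k * Matrix.diagonal α * k'

/-- A sequence of matrices has bounded steps if consecutive quotients are uniformly
bounded (in operator norm) together with their inverses. -/
noncomputable def HasBoundedSteps {d : ℕ} (g : ℕ → Matrix (Fin d) (Fin d) ℝ) : Prop :=
  ∃ r₀ : ℝ, 1 ≤ r₀ ∧ ∀ n : ℕ,
    opNorm ((g n)⁻¹ * g (n + 1)) ≤ r₀ ∧ opNorm ((g (n + 1))⁻¹ * g n) ≤ r₀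

/-- The sine of the angle between two vectors of Euclidean `ℝ^d`. -/
noncomputable def sinAngle {d : ℕ} (u v : EuclideanSpace ℝ (Fin d)) : ℝ :=
  Real.sin (InnerProductGeometry.angle u v)

/-- The first standard basis vector of Euclidean `ℝ^d`. -/
noncomputable def e1 {d : ℕ} (h : 0 < d) : EuclideanSpace ℝ (Fin d) :=
  EuclideanSpace.single ⟨0, h⟩ 1

open RealInnerProductSpace InnerProductGeometry

section Aux

variable {d : ℕ}

lemma appE_mul (A B : Matrix (Fin d) (Fin d) ℝ) (v : EuclideanSpace ℝ (Fin d)) :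
    appE (A*B) v = appE A (appE B v) := by
  ext i
  show ((A*B) *ᵥ (fun j => v j)) i = (A *ᵥ (B *ᵥ fun j => v j)) i
  rw [Matrix.mulVec_mulVec]

lemma inner_appE_orth {A : Matrix (Fin d) (Fin d) ℝ} (hA : A * Aᵀ = 1)
    (u v : EuclideanSpace ℝ (Fin d)) : ⟪appE A u, appE A v⟫ = ⟪u, v⟫ := by
  have h2 : Aᵀ * A = 1 := mul_eq_one_comm.mp hA
  have : ⟪appE A u, appE A v⟫ = dotProduct (A *ᵥ fun j => u j) (A *ᵥ fun j => v j) := by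
    simp [PiLp.inner_apply, RCLike.inner_apply, dotProduct]
    exact Finset.sum_congr rfl (fun x _ => mul_comm _ _)
  rw [this, Matrix.dotProduct_mulVec, ← Matrix.mulVec_transpose, Matrix.mulVec_mulVec, h2,
    Matrix.one_mulVec]
  simp [PiLp.inner_apply, RCLike.inner_apply, dotProduct, mul_comm]

lemma norm_appE_orth {A : Matrix (Fin d) (Fin d) ℝ} (hA : A * Aᵀ = 1)
    (v : EuclideanSpace ℝ (Fin d)) : ‖appE A v‖ = ‖v‖ := by
  have h := inner_appE_orth hA v v
  rw [real_inner_self_eq_norm_mul_norm, real_inner_self_eq_norm_mul_norm] at h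
  nlinarith [norm_nonneg (appE A v), norm_nonneg v]

lemma norm_appE_le (M : Matrix (Fin d) (Fin d) ℝ) (v : EuclideanSpace ℝ (Fin d)) :
    ‖appE M v‖ ≤ opNorm M * ‖v‖ :=
  (LinearMap.toContinuousLinearMap (Matrix.toEuclideanLin M)).le_opNorm v

lemma opNorm_le_of_forall {M : Matrix (Fin d) (Fin d) ℝ} {c : ℝ} (hc : 0 ≤ c)
    (h : ∀ v, ‖appE M v‖ ≤ c * ‖v‖) : opNorm M ≤ c :=
  ContinuousLinearMap.opNorm_le_bound _ hc h

lemma opNorm_mul_le (A B : Matrix (Fin d) (Fin d) ℝ) :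
    opNorm (A*B) ≤ opNorm A * opNorm B := by
  apply opNorm_le_of_forall (mul_nonneg (norm_nonneg _) (norm_nonneg _))
  intro v
  rw [appE_mul]
  calc ‖appE A (appE B v)‖ ≤ opNorm A * ‖appE B v‖ := norm_appE_le _ _
    _ ≤ opNorm A * (opNorm B * ‖v‖) :=
        mul_le_mul_of_nonneg_left (norm_appE_le _ _) (norm_nonneg _)
    _ = opNorm A * opNorm B * ‖v‖ := by ring

lemma angle_appE_orth {A : Matrix (Fin d) (Fin d) ℝ} (hA : A * Aᵀ = 1)
    (u v : EuclideanSpace ℝ (Fin d)) : angle (appE A u) (appE A v) = angle u v := by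
  rw [angle, angle, inner_appE_orth hA, norm_appE_orth hA, norm_appE_orth hA]

lemma appE_diagonal (γ : Fin d → ℝ) (c : EuclideanSpace ℝ (Fin d)) (i : Fin d) :
    appE (Matrix.diagonal γ) c i = γ i * c i :=
  Matrix.mulVec_diagonal γ (fun j => c j) i

lemma inner_self_sum (x : EuclideanSpace ℝ (Fin d)) : ⟪x, x⟫ = ∑ i, x i * x i := by
  simp only [PiLp.inner_apply, RCLike.inner_apply, conj_trivial]

lemma norm_e1 (h : 0 < d) : ‖e1 h‖ = 1 := by
  simp [e1, EuclideanSpace.norm_single]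

lemma inner_e1 (h : 0 < d) (x : EuclideanSpace ℝ (Fin d)) : ⟪x, e1 h⟫ = x ⟨0, h⟩ := by
  simp [PiLp.inner_apply, RCLike.inner_apply, e1, EuclideanSpace.single_apply]

lemma norm_appE_diag_le {γ : Fin d → ℝ} {a : ℝ} (ha : 0 ≤ a) (hb : ∀ i, |γ i| ≤ a)
    (c : EuclideanSpace ℝ (Fin d)) : ‖appE (Matrix.diagonal γ) c‖ ≤ a * ‖c‖ := by
  set x := appE (Matrix.diagonal γ) c with hx
  have h1 : ‖x‖ ^ 2 ≤ (a * ‖c‖) ^ 2 := by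
    rw [← real_inner_self_eq_norm_sq, inner_self_sum]
    have : (a * ‖c‖)^2 = ∑ i, a^2 * (c i * c i) := by
      rw [← Finset.mul_sum, ← inner_self_sum, real_inner_self_eq_norm_sq]; ring
    rw [this]
    apply Finset.sum_le_sum
    intro i _
    rw [hx, appE_diagonal]
    have := hb i
    have habs : |γ i * c i| ≤ a * |c i| := by
      rw [abs_mul]; exact mul_le_mul_of_nonneg_right this (abs_nonneg _)
    calc γ i * c i * (γ i * c i) = |γ i * c i| * |γ i * c i| := (abs_mul_abs_self _).symm
      _ ≤ (a * |c i|) * (a * |c i|) := mul_self_le_mul_self (abs_nonneg _) habs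
      _ = a^2 * (|c i| * |c i|) := by ring
      _ = a^2 * (c i * c i) := by rw [abs_mul_abs_self]
  calc ‖x‖ = Real.sqrt (‖x‖^2) := (Real.sqrt_sq (norm_nonneg _)).symm
    _ ≤ Real.sqrt ((a * ‖c‖)^2) := Real.sqrt_le_sqrt h1
    _ = a * ‖c‖ := Real.sqrt_sq (by positivity)

lemma opNorm_svd_le {g k : Matrix (Fin d) (Fin d) ℝ} {α : Fin d → ℝ}
    {k' : Matrix (Fin d) (Fin d) ℝ} (h0 : 0 < d) (h : IsSVD g k α k') :
    opNorm g ≤ α ⟨0, h0⟩ := by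
  obtain ⟨hk, hk', hpos, hanti, hgeq⟩ := h
  have ha0 : 0 ≤ α ⟨0, h0⟩ := (hpos _).le
  apply opNorm_le_of_forall ha0
  intro v
  rw [hgeq, appE_mul, appE_mul]
  rw [norm_appE_orth hk]
  calc ‖appE (Matrix.diagonal α) (appE k' v)‖ ≤ α ⟨0, h0⟩ * ‖appE k' v‖ := by
        apply norm_appE_diag_le ha0
        intro i
        rw [abs_of_pos (hpos i)]
        exact hanti (Fin.mk_le_mk.mpr (Nat.zero_le _))
    _ = α ⟨0, h0⟩ * ‖v‖ := by rw [norm_appE_orth hk']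

lemma svd_apply_right {g k : Matrix (Fin d) (Fin d) ℝ} {α : Fin d → ℝ}
    {k' : Matrix (Fin d) (Fin d) ℝ} (h0 : 0 < d) (h : IsSVD g k α k') :
    appE g (appE k'ᵀ (e1 h0)) = α ⟨0, h0⟩ • appE k (e1 h0) := by
  obtain ⟨hk, hk', hpos, hanti, hgeq⟩ := h
  rw [hgeq, ← appE_mul]
  have : k * Matrix.diagonal α * k' * k'ᵀ = k * Matrix.diagonal α := by
    rw [Matrix.mul_assoc, hk', Matrix.mul_one]
  rw [this, appE_mul]
  have hd : appE (Matrix.diagonal α) (e1 h0) = α ⟨0, h0⟩ • e1 h0 := by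
    ext i
    rw [appE_diagonal]
    show α i * e1 h0 i = α ⟨0, h0⟩ * e1 h0 i
    by_cases hi : i = ⟨0, h0⟩
    · rw [hi]
    · simp [e1, EuclideanSpace.single_apply, hi]
  rw [hd]
  exact (Matrix.toEuclideanLin k).map_smul _ _

lemma pos_of_two_le' (hd : 2 ≤ d) : 0 < d := by omega

lemma one_lt_of_two_le' (hd : 2 ≤ d) : 1 < d := by omega

lemma sin_bound (hd : 2 ≤ d) {g k : Matrix (Fin d) (Fin d) ℝ} {α : Fin d → ℝ}
    {k' : Matrix (Fin d) (Fin d) ℝ} (h : IsSVD g k α k') (w : EuclideanSpace ℝ (Fin d)) :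
    sinAngle (appE g w) (appE k (e1 (pos_of_two_le' hd))) * ‖appE g w‖
      ≤ α ⟨1, one_lt_of_two_le' hd⟩ * ‖w‖ := by
  have h0 : 0 < d := by omega
  obtain ⟨hk, hk', hpos, hanti, hgeq⟩ := h
  set c := appE k' w with hc
  set x := appE (Matrix.diagonal α) c with hxdef
  have hx : appE g w = appE k x := by rw [hgeq, appE_mul, appE_mul]
  have hnx : ‖appE g w‖ = ‖x‖ := by rw [hx, norm_appE_orth hk]
  have hang : sinAngle (appE g w) (appE k (e1 h0)) = sinAngle x (e1 h0) := by
    rw [hx, sinAngle, sinAngle, angle_appE_orth hk]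
  rw [hang, hnx]
  have hsin := sin_angle_mul_norm_mul_norm x (e1 h0)
  have he : ⟪e1 h0, e1 h0⟫ = 1 := by
    rw [real_inner_self_eq_norm_sq, norm_e1]; norm_num
  rw [norm_e1, mul_one, he, mul_one, inner_e1] at hsin
  rw [sinAngle, hsin]
  have hxi : ∀ i, x i = α i * c i := fun i => appE_diagonal α c i
  have hsum : ⟪x, x⟫ = x ⟨0, h0⟩ * x ⟨0, h0⟩ + ∑ i ∈ Finset.univ.erase ⟨0, h0⟩, x i * x i := by
    rw [inner_self_sum]
    exact (Finset.add_sum_erase _ _ (Finset.mem_univ _)).symm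
  have htail : ∑ i ∈ Finset.univ.erase ⟨0, h0⟩, x i * x i
      ≤ (α ⟨1, by omega⟩ * ‖w‖) ^ 2 := by
    have hw : ‖c‖ = ‖w‖ := norm_appE_orth hk' w
    have hb : ∀ i ∈ Finset.univ.erase ⟨0, h0⟩, x i * x i
        ≤ α ⟨1, by omega⟩ ^ 2 * (c i * c i) := by
      intro i hi
      have hine : i ≠ ⟨0, h0⟩ := Finset.ne_of_mem_erase hi
      have h1le : (⟨1, by omega⟩ : Fin d) ≤ i := by
        rw [Fin.mk_le_mk]
        have hvi : i.val ≠ 0 := fun h' => hine (Fin.ext h')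
        omega
      have hα : α i ≤ α ⟨1, by omega⟩ := hanti h1le
      have hαp : 0 < α i := hpos i
      rw [hxi]
      nlinarith [mul_le_mul_of_nonneg_right
        (mul_le_mul hα hα hαp.le (le_trans hαp.le hα)) (mul_self_nonneg (c i))]
    calc ∑ i ∈ Finset.univ.erase ⟨0, h0⟩, x i * x i
        ≤ ∑ i ∈ Finset.univ.erase ⟨0, h0⟩, α ⟨1, by omega⟩ ^ 2 * (c i * c i) :=
          Finset.sum_le_sum hb
      _ ≤ ∑ i, α ⟨1, by omega⟩ ^ 2 * (c i * c i) := by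
          apply Finset.sum_le_sum_of_subset_of_nonneg (Finset.erase_subset _ _)
          intro i _ _
          nlinarith [sq_nonneg (α (⟨1, by omega⟩ : Fin d) * c i)]
      _ = α ⟨1, by omega⟩ ^ 2 * ⟪c, c⟫ := by rw [inner_self_sum, Finset.mul_sum]
      _ = (α ⟨1, by omega⟩ * ‖w‖) ^ 2 := by
          rw [real_inner_self_eq_norm_sq, hw]; ring
  calc Real.sqrt (⟪x,x⟫ - x ⟨0,h0⟩ * x ⟨0,h0⟩)
      ≤ Real.sqrt ((α ⟨1, by omega⟩ * ‖w‖) ^ 2) := by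
        apply Real.sqrt_le_sqrt
        rw [hsum]; linarith
    _ = α ⟨1, by omega⟩ * ‖w‖ := Real.sqrt_sq (mul_nonneg (hpos _).le (norm_nonneg _))

lemma isSVD_isUnit_det {g k : Matrix (Fin d) (Fin d) ℝ} {α : Fin d → ℝ}
    {k' : Matrix (Fin d) (Fin d) ℝ} (h : IsSVD g k α k') : IsUnit g.det := by
  obtain ⟨hk, hk', hpos, hanti, hgeq⟩ := h
  have hright : g * (k'ᵀ * Matrix.diagonal (fun i => (α i)⁻¹) * kᵀ) = 1 := by
    rw [hgeq]
    simp only [Matrix.mul_assoc]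
    rw [show k' * (k'ᵀ * (Matrix.diagonal (fun i => (α i)⁻¹) * kᵀ))
        = Matrix.diagonal (fun i => (α i)⁻¹) * kᵀ from by
      rw [← Matrix.mul_assoc k' k'ᵀ, hk', Matrix.one_mul]]
    rw [← Matrix.mul_assoc (Matrix.diagonal α), Matrix.diagonal_mul_diagonal]
    rw [show (fun i => α i * (α i)⁻¹) = fun _ => (1:ℝ) from
      funext fun i => mul_inv_cancel₀ (hpos i).ne']
    rw [show Matrix.diagonal (fun _ : Fin d => (1:ℝ)) = 1 from Matrix.diagonal_one]
    rw [Matrix.one_mul, hk]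
  exact Matrix.isUnit_det_of_right_inverse hright

lemma sinAngle_nonneg' (u v : EuclideanSpace ℝ (Fin d)) : 0 ≤ sinAngle u v :=
  Real.sin_nonneg_of_nonneg_of_le_pi (angle_nonneg u v) (angle_le_pi u v)

lemma one_step (hd : 2 ≤ d) {g g' k l : Matrix (Fin d) (Fin d) ℝ} {α β : Fin d → ℝ}
    {k' l' : Matrix (Fin d) (Fin d) ℝ} (hg : IsSVD g k α k') (hh : IsSVD g' l β l')
    {r : ℝ} (hr : 1 ≤ r) (h1 : opNorm (g⁻¹ * g') ≤ r) (h2 : opNorm (g'⁻¹ * g) ≤ r) :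
    sinAngle (appE k (e1 (pos_of_two_le' hd))) (appE l (e1 (pos_of_two_le' hd)))
      ≤ r^2 * (α ⟨1, one_lt_of_two_le' hd⟩ / α ⟨0, pos_of_two_le' hd⟩) := by
  have h0 : 0 < d := by omega
  have hgu : IsUnit g.det := isSVD_isUnit_det hg
  have hgu' : IsUnit g'.det := isSVD_isUnit_det hh
  have hgs : g * (g⁻¹ * g') = g' := by
    rw [← Matrix.mul_assoc, Matrix.mul_nonsing_inv _ hgu, Matrix.one_mul]
  have hg's' : g' * (g'⁻¹ * g) = g := by
    rw [← Matrix.mul_assoc, Matrix.mul_nonsing_inv _ hgu', Matrix.one_mul]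
  set w := appE (g⁻¹ * g') (appE l'ᵀ (e1 h0)) with hw
  have hgw : appE g w = β ⟨0, h0⟩ • appE l (e1 h0) := by
    rw [hw, ← appE_mul, hgs]
    exact svd_apply_right h0 hh
  have hβ0 : 0 < β ⟨0, h0⟩ := hh.2.2.1 _
  have hα0 : 0 < α ⟨0, h0⟩ := hg.2.2.1 _
  have hα1 : 0 < α ⟨1, by omega⟩ := hg.2.2.1 _
  have hnl : ‖appE l (e1 h0)‖ = 1 := by rw [norm_appE_orth hh.1, norm_e1]
  have hnk : ‖appE k (e1 h0)‖ = 1 := by rw [norm_appE_orth hg.1, norm_e1]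
  have hn : ‖appE g w‖ = β ⟨0, h0⟩ := by
    rw [hgw, norm_smul, hnl, mul_one, Real.norm_eq_abs, abs_of_pos hβ0]
  have hsin_eq : sinAngle (appE g w) (appE k (e1 h0))
      = sinAngle (appE k (e1 h0)) (appE l (e1 h0)) := by
    rw [hgw, sinAngle, sinAngle, angle_smul_left_of_pos _ _ hβ0, angle_comm]
  have hmain := sin_bound hd hg w
  rw [hsin_eq, hn] at hmain
  have hl'orth : l'ᵀ * (l'ᵀ)ᵀ = 1 := by
    rw [Matrix.transpose_transpose]; exact mul_eq_one_comm.mp hh.2.1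
  have hwn : ‖w‖ ≤ r := by
    calc ‖w‖ ≤ opNorm (g⁻¹ * g') * ‖appE l'ᵀ (e1 h0)‖ := norm_appE_le _ _
      _ = opNorm (g⁻¹ * g') := by rw [norm_appE_orth hl'orth, norm_e1, mul_one]
      _ ≤ r := h1
  have hk'orth : k'ᵀ * (k'ᵀ)ᵀ = 1 := by
    rw [Matrix.transpose_transpose]; exact mul_eq_one_comm.mp hg.2.1
  have hαop : α ⟨0, h0⟩ ≤ opNorm g := by
    have hcalc : ‖appE g (appE k'ᵀ (e1 h0))‖ = α ⟨0, h0⟩ := by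
      rw [svd_apply_right h0 hg, norm_smul, hnk, mul_one, Real.norm_eq_abs, abs_of_pos hα0]
    calc α ⟨0, h0⟩ = ‖appE g (appE k'ᵀ (e1 h0))‖ := hcalc.symm
      _ ≤ opNorm g * ‖appE k'ᵀ (e1 h0)‖ := norm_appE_le _ _
      _ = opNorm g := by rw [norm_appE_orth hk'orth, norm_e1, mul_one]
  have hαβ : α ⟨0, h0⟩ ≤ β ⟨0, h0⟩ * r := by
    calc α ⟨0, h0⟩ ≤ opNorm g := hαop
      _ = opNorm (g' * (g'⁻¹ * g)) := by rw [hg's']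
      _ ≤ opNorm g' * opNorm (g'⁻¹ * g) := opNorm_mul_le _ _
      _ ≤ β ⟨0, h0⟩ * r := mul_le_mul (opNorm_svd_le h0 hh) h2 (norm_nonneg _) hβ0.le
  have hs0 : 0 ≤ sinAngle (appE k (e1 h0)) (appE l (e1 h0)) := sinAngle_nonneg' _ _
  have hsinβ : sinAngle (appE k (e1 h0)) (appE l (e1 h0)) * β ⟨0, h0⟩
      ≤ α ⟨1, by omega⟩ * r :=
    le_trans hmain (mul_le_mul_of_nonneg_left hwn hα1.le)
  rw [show r^2 * (α ⟨1, by omega⟩ / α ⟨0, h0⟩) = (r^2 * α ⟨1, by omega⟩) / α ⟨0, h0⟩ from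
    (mul_div_assoc _ _ _).symm, le_div_iff₀ hα0]
  nlinarith [mul_le_mul_of_nonneg_left hαβ hs0,
    mul_le_mul_of_nonneg_right hsinβ (by linarith : (0:ℝ) ≤ r)]

noncomputable def pd (u v : EuclideanSpace ℝ (Fin d)) : ℝ := min ‖u - v‖ ‖u + v‖

lemma pd_self (u : EuclideanSpace ℝ (Fin d)) : pd u u = 0 := by
  rw [pd, sub_self, norm_zero]
  exact min_eq_left (norm_nonneg _)

lemma pd_triangle (u v w : EuclideanSpace ℝ (Fin d)) : pd u w ≤ pd u v + pd v w := by
  simp only [pd]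
  rcases min_cases ‖u - v‖ ‖u + v‖ with ⟨h1, _⟩ | ⟨h1, _⟩ <;>
  rcases min_cases ‖v - w‖ ‖v + w‖ with ⟨h2, _⟩ | ⟨h2, _⟩ <;> rw [h1, h2]
  · exact le_trans (min_le_left _ _) (by simpa using norm_sub_le_norm_sub_add_norm_sub u v w)
  · refine le_trans (min_le_right _ _) ?_
    calc ‖u + w‖ = ‖(u - v) + (v + w)‖ := by congr 1; abel
    _ ≤ ‖u - v‖ + ‖v + w‖ := norm_add_le _ _
  · refine le_trans (min_le_right _ _) ?_
    calc ‖u + w‖ = ‖(u + v) - (v - w)‖ := by congr 1; abel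
    _ ≤ ‖u + v‖ + ‖v - w‖ := norm_sub_le _ _
  · refine le_trans (min_le_left _ _) ?_
    calc ‖u - w‖ = ‖(u + v) - (v + w)‖ := by congr 1; abel
    _ ≤ ‖u + v‖ + ‖v + w‖ := norm_sub_le _ _

lemma sinAngle_eq {u v : EuclideanSpace ℝ (Fin d)} (hu : ‖u‖ = 1) (hv : ‖v‖ = 1) :
    sinAngle u v = Real.sqrt (1 - ⟪u, v⟫ * ⟪u, v⟫) := by
  have h := sin_angle_mul_norm_mul_norm u v
  rw [hu, hv, real_inner_self_eq_norm_mul_norm, real_inner_self_eq_norm_mul_norm, hu, hv] at h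
  simpa [sinAngle] using h

lemma norm_sub_sq' {u v : EuclideanSpace ℝ (Fin d)} (hu : ‖u‖ = 1) (hv : ‖v‖ = 1) :
    ‖u - v‖ ^ 2 = 2 - 2 * ⟪u, v⟫ := by
  rw [norm_sub_sq_real, hu, hv]; ring

lemma norm_add_sq' {u v : EuclideanSpace ℝ (Fin d)} (hu : ‖u‖ = 1) (hv : ‖v‖ = 1) :
    ‖u + v‖ ^ 2 = 2 + 2 * ⟪u, v⟫ := by
  rw [norm_add_sq_real, hu, hv]; ring

lemma sinAngle_le_pd {u v : EuclideanSpace ℝ (Fin d)} (hu : ‖u‖ = 1) (hv : ‖v‖ = 1) :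
    sinAngle u v ≤ pd u v := by
  rw [sinAngle_eq hu hv, pd]
  have hs := norm_sub_sq' hu hv
  have ha := norm_add_sq' hu hv
  refine le_min ?_ ?_
  · calc Real.sqrt (1 - ⟪u,v⟫ * ⟪u,v⟫) ≤ Real.sqrt (‖u - v‖ ^ 2) :=
        Real.sqrt_le_sqrt (by nlinarith [sq_nonneg (1 - ⟪u,v⟫)])
    _ = ‖u - v‖ := Real.sqrt_sq (norm_nonneg _)
  · calc Real.sqrt (1 - ⟪u,v⟫ * ⟪u,v⟫) ≤ Real.sqrt (‖u + v‖ ^ 2) :=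
        Real.sqrt_le_sqrt (by nlinarith [sq_nonneg (1 + ⟪u,v⟫)])
    _ = ‖u + v‖ := Real.sqrt_sq (norm_nonneg _)

lemma pd_le_sqrt2_sinAngle {u v : EuclideanSpace ℝ (Fin d)} (hu : ‖u‖ = 1) (hv : ‖v‖ = 1) :
    pd u v ≤ Real.sqrt 2 * sinAngle u v := by
  have habs : |⟪u, v⟫| ≤ 1 := by
    have := abs_real_inner_le_norm u v; rwa [hu, hv, mul_one] at this
  have h1 : (-1:ℝ) ≤ ⟪u,v⟫ := (abs_le.mp habs).1
  have h2 : ⟪u,v⟫ ≤ 1 := (abs_le.mp habs).2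
  rw [sinAngle_eq hu hv, ← Real.sqrt_mul (by norm_num : (0:ℝ) ≤ 2)]
  rcases le_or_gt 0 ⟪u,v⟫ with hc | hc
  · calc pd u v ≤ ‖u - v‖ := min_le_left _ _
    _ = Real.sqrt (‖u - v‖ ^ 2) := (Real.sqrt_sq (norm_nonneg _)).symm
    _ ≤ Real.sqrt (2 * (1 - ⟪u,v⟫ * ⟪u,v⟫)) := by
        apply Real.sqrt_le_sqrt
        rw [norm_sub_sq' hu hv]; nlinarith
  · calc pd u v ≤ ‖u + v‖ := min_le_right _ _
    _ = Real.sqrt (‖u + v‖ ^ 2) := (Real.sqrt_sq (norm_nonneg _)).symm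
    _ ≤ Real.sqrt (2 * (1 - ⟪u,v⟫ * ⟪u,v⟫)) := by
        apply Real.sqrt_le_sqrt
        rw [norm_add_sq' hu hv]; nlinarith

lemma pd_chain (u : ℕ → EuclideanSpace ℝ (Fin d)) {n m : ℕ} (h : n ≤ m) :
    pd (u n) (u m) ≤ ∑ j ∈ Finset.Ico n m, pd (u j) (u (j+1)) := by
  induction m, h using Nat.le_induction with
  | base => simp [pd_self]
  | succ m hnm ih =>
      rw [Finset.sum_Ico_succ_top (by omega)]
      calc pd (u n) (u (m+1)) ≤ pd (u n) (u m) + pd (u m) (u (m+1)) := pd_triangle _ _ _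
        _ ≤ _ := by linarith

end Aux
/-- Cauchy estimate for the boundary map: along a bounded-step sequence one has
`sin∠(k(n)e₁, k(m)e₁) ≤ C ∑_{j=n}^{m−1} α(j) 1/α(j) 0`; in particular, if the series of
top singular value gaps converges, the lines `[k(n)e₁]` form a Cauchy sequence. -/
theorem stmt14 (d : ℕ) (hd : 2 ≤ d) (g : ℕ → Matrix (Fin d) (Fin d) ℝ)
    (hbd : HasBoundedSteps g)
    (k : ℕ → Matrix (Fin d) (Fin d) ℝ) (α : ℕ → Fin d → ℝ)
    (k' : ℕ → Matrix (Fin d) (Fin d) ℝ)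
    (hsvd : ∀ n : ℕ, IsSVD (g n) (k n) (α n) (k' n)) :
    ∃ C : ℝ, 0 < C ∧
      (∀ n m : ℕ, n ≤ m →
        sinAngle (appE (k n) (e1 (by omega))) (appE (k m) (e1 (by omega)))
          ≤ C * ∑ j ∈ Finset.Ico n m, (α j ⟨1, by omega⟩ / α j ⟨0, by omega⟩)) ∧
      ((Summable fun j : ℕ => α j ⟨1, by omega⟩ / α j ⟨0, by omega⟩) →
        ∀ ε : ℝ, 0 < ε → ∃ N : ℕ, ∀ m n : ℕ, N ≤ n → n ≤ m →
          sinAngle (appE (k n) (e1 (by omega))) (appE (k m) (e1 (by omega))) < ε) := by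
  have h0 : 0 < d := by omega
  obtain ⟨r, hr1, hrs⟩ := hbd
  have hr0 : (0:ℝ) < r := lt_of_lt_of_le one_pos hr1
  set C : ℝ := Real.sqrt 2 * r ^ 2 with hC
  have hCpos : 0 < C := mul_pos (Real.sqrt_pos.mpr (by norm_num)) (pow_pos hr0 2)
  set u : ℕ → EuclideanSpace ℝ (Fin d) := fun j => appE (k j) (e1 h0) with hu
  have hunit : ∀ j, ‖u j‖ = 1 := fun j => by
    rw [hu]; rw [norm_appE_orth (hsvd j).1, norm_e1]
  set f : ℕ → ℝ := fun j => α j ⟨1, by omega⟩ / α j ⟨0, by omega⟩ with hf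
  have hfpos : ∀ j, 0 < f j := fun j => div_pos ((hsvd j).2.2.1 _) ((hsvd j).2.2.1 _)
  have hkey : ∀ n m : ℕ, n ≤ m → sinAngle (u n) (u m) ≤ C * ∑ j ∈ Finset.Ico n m, f j := by
    intro n m hnm
    calc sinAngle (u n) (u m) ≤ pd (u n) (u m) := sinAngle_le_pd (hunit n) (hunit m)
      _ ≤ ∑ j ∈ Finset.Ico n m, pd (u j) (u (j+1)) := pd_chain u hnm
      _ ≤ ∑ j ∈ Finset.Ico n m, C * f j := by
          apply Finset.sum_le_sum
          intro j _
          calc pd (u j) (u (j+1)) ≤ Real.sqrt 2 * sinAngle (u j) (u (j+1)) :=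
              pd_le_sqrt2_sinAngle (hunit j) (hunit (j+1))
            _ ≤ Real.sqrt 2 * (r^2 * f j) := by
                apply mul_le_mul_of_nonneg_left _ (Real.sqrt_nonneg 2)
                exact one_step hd (hsvd j) (hsvd (j+1)) hr1 (hrs j).1 (hrs j).2
            _ = C * f j := by rw [hC]; ring
      _ = C * ∑ j ∈ Finset.Ico n m, f j := (Finset.mul_sum _ _ _).symm
  refine ⟨C, hCpos, hkey, ?_⟩
  intro hsum ε hε
  have hcauchy : CauchySeq (fun n => ∑ j ∈ Finset.range n, f j) :=
    hsum.hasSum.tendsto_sum_nat.cauchySeq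
  obtain ⟨N, hN⟩ := Metric.cauchySeq_iff.mp hcauchy (ε / C) (div_pos hε hCpos)
  refine ⟨N, fun m n hNn hnm => ?_⟩
  have hlt : ∑ j ∈ Finset.Ico n m, f j < ε / C := by
    have := hN m (le_trans hNn hnm) n hNn
    rw [Real.dist_eq] at this
    calc ∑ j ∈ Finset.Ico n m, f j
        = ∑ j ∈ Finset.range m, f j - ∑ j ∈ Finset.range n, f j :=
          Finset.sum_Ico_eq_sub f hnm
      _ ≤ |∑ j ∈ Finset.range m, f j - ∑ j ∈ Finset.range n, f j| := le_abs_self _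
      _ < ε / C := this
  calc sinAngle (u n) (u m) ≤ C * ∑ j ∈ Finset.Ico n m, f j := hkey n m hnm
    _ < C * (ε / C) := mul_lt_mul_of_pos_left hlt hCpos
    _ = ε := by field_simp
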